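/- Let f and f' be tuples in G^n whose entries split into two sets indexed by a common partition of positions, such that every entry coming from the first set commutes with every entry coming from the second set. If f restricted to each set is Hurwitz-equivalent (as a tuple) to f' restricted to the same set, and the positions agree, then f and f' are Hurwitz-equivalent in G^n. In particular, if all entries of a tuple pairwise commute, then any permutation of the tuple is Hurwitz-equivalent to it. -/

import Mathlib

/-- The Hurwitz move `σ_i` on tuples in `G^n`. -/
def hurwitzMove {G : Type*} [Group G] {n : ℕ} (i : ℕ) (h : i + 1 < n) (t : Fin n → G) :
    Fin n → G :=
  fun j =>
    if (j : ℕ) = i then t ⟨i + 1, h⟩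
    else if (j : ℕ) = i + 1 then (t ⟨i + 1, h⟩)⁻¹ * t ⟨i, Nat.lt_of_succ_lt h⟩ * t ⟨i + 1, h⟩
    else t j

/-- One tuple is obtained from another by a single Hurwitz move. -/
inductive HurwitzStep {G : Type*} [Group G] {n : ℕ} : (Fin n → G) → (Fin n → G) → Prop
  | move (i : ℕ) (h : i + 1 < n) (t : Fin n → G) : HurwitzStep t (hurwitzMove i h t)

/-- Hurwitz equivalence: the equivalence relation generated by Hurwitz moves. -/
def HurwitzEquiv {G : Type*} [Group G] {n : ℕ} : (Fin n → G) → (Fin n → G) → Prop :=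
  Relation.EqvGen HurwitzStep

namespace HurwitzAux

variable {G : Type*} [Group G] {n : ℕ}

/-- A Hurwitz move on a commuting tuple is just an adjacent swap. -/
lemma step_adj (s : Fin n → G) (hc : ∀ i j, s i * s j = s j * s i) (i : ℕ) (hi : i + 1 < n) :
    HurwitzStep s (s ∘ Equiv.swap ⟨i, Nat.lt_of_succ_lt hi⟩ ⟨i + 1, hi⟩) := by
  have key : (s ∘ Equiv.swap ⟨i, Nat.lt_of_succ_lt hi⟩ ⟨i + 1, hi⟩) = hurwitzMove i hi s := by
    funext j
    simp only [Function.comp_apply, hurwitzMove]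
    by_cases h1 : (j : ℕ) = i
    · have : j = (⟨i, Nat.lt_of_succ_lt hi⟩ : Fin n) := Fin.ext h1
      subst this
      rw [Equiv.swap_apply_left]
      simp [h1]
    · by_cases h2 : (j : ℕ) = i + 1
      · have : j = (⟨i + 1, hi⟩ : Fin n) := Fin.ext h2
        subst this
        rw [Equiv.swap_apply_right]
        rw [if_neg h1, if_pos rfl, mul_assoc, hc, ← mul_assoc, inv_mul_cancel, one_mul]
      · rw [Equiv.swap_apply_of_ne_of_ne (fun h => h1 (by simpa using congrArg Fin.val h))
          (fun h => h2 (by simpa using congrArg Fin.val h))]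
        simp [h1, h2]
  rw [key]
  exact HurwitzStep.move i hi s

lemma equiv_adj (s : Fin n → G) (hc : ∀ i j, s i * s j = s j * s i) (a b : Fin n)
    (hab : (b : ℕ) = (a : ℕ) + 1) :
    HurwitzEquiv (s ∘ Equiv.swap a b) s := by
  have hb : (a : ℕ) + 1 < n := hab ▸ b.isLt
  have ha : a = ⟨(a : ℕ), Nat.lt_of_succ_lt hb⟩ := Fin.ext rfl
  have hb' : b = ⟨(a : ℕ) + 1, hb⟩ := Fin.ext hab
  rw [ha, hb']
  exact Relation.EqvGen.symm _ _ (Relation.EqvGen.rel _ _ (step_adj s hc (a : ℕ) hb))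

/-- Any transposition applied to a commuting tuple gives a Hurwitz-equivalent tuple. -/
lemma equiv_swap (d : ℕ) : ∀ (s : Fin n → G), (∀ i j, s i * s j = s j * s i) →
    ∀ (a b : Fin n), (b : ℕ) = (a : ℕ) + d → HurwitzEquiv (s ∘ Equiv.swap a b) s := by
  induction d using Nat.strong_induction_on with
  | _ d IH =>
    intro s hc a b hab
    match d, hab with
    | 0, hab =>
      have : a = b := Fin.ext (by omega)
      subst this
      simp only [Equiv.swap_self]
      exact Relation.EqvGen.refl _
    | 1, hab => exact equiv_adj s hc a b hab
    | (d + 2), hab =>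
      have hcn : (a : ℕ) + d + 1 < n := by omega
      set c : Fin n := ⟨(a : ℕ) + d + 1, hcn⟩ with hcdef
      have hac : a ≠ c := by
        intro h; apply_fun (Fin.val) at h; simp [hcdef] at h; omega
      have hab' : a ≠ b := by
        intro h; apply_fun (Fin.val) at h; omega
      have hkey : Equiv.swap a b = Equiv.swap c b * Equiv.swap a c * Equiv.swap c b := by
        rw [Equiv.swap_mul_swap_mul_swap hac hab', Equiv.swap_comm]
      have hcomp : s ∘ Equiv.swap a b
          = ((s ∘ Equiv.swap c b) ∘ Equiv.swap a c) ∘ Equiv.swap c b := by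
        rw [hkey]; funext j; simp [Function.comp, Equiv.Perm.mul_apply]
      rw [hcomp]
      have hc1 : ∀ i j, (s ∘ Equiv.swap c b) i * (s ∘ Equiv.swap c b) j
          = (s ∘ Equiv.swap c b) j * (s ∘ Equiv.swap c b) i := fun i j => hc _ _
      have hc2 : ∀ i j, ((s ∘ Equiv.swap c b) ∘ Equiv.swap a c) i
            * ((s ∘ Equiv.swap c b) ∘ Equiv.swap a c) j
          = ((s ∘ Equiv.swap c b) ∘ Equiv.swap a c) j
            * ((s ∘ Equiv.swap c b) ∘ Equiv.swap a c) i := fun i j => hc _ _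
      have e1 : HurwitzEquiv (s ∘ Equiv.swap c b) s :=
        equiv_adj s hc c b (by simp [hcdef]; omega)
      have e2 : HurwitzEquiv ((s ∘ Equiv.swap c b) ∘ Equiv.swap a c) (s ∘ Equiv.swap c b) :=
        IH (d + 1) (by omega) _ hc1 a c (by simp [hcdef]; omega)
      have e3 : HurwitzEquiv (((s ∘ Equiv.swap c b) ∘ Equiv.swap a c) ∘ Equiv.swap c b)
          ((s ∘ Equiv.swap c b) ∘ Equiv.swap a c) :=
        equiv_adj _ hc2 c b (by simp [hcdef]; omega)
      exact Relation.EqvGen.trans _ _ _ e3 (Relation.EqvGen.trans _ _ _ e2 e1)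

end HurwitzAux

/-- If all entries of a tuple pairwise commute, then any permutation of the tuple is
Hurwitz-equivalent to it. -/
theorem hurwitzEquiv_perm_of_commute {G : Type*} [Group G] {n : ℕ} (t : Fin n → G)
    (hcomm : ∀ i j : Fin n, t i * t j = t j * t i) (π : Equiv.Perm (Fin n)) :
    HurwitzEquiv (t ∘ π) t := by
  refine Equiv.Perm.swap_induction_on' π (by simp only [Equiv.Perm.coe_one, Function.comp_id]; exact Relation.EqvGen.refl t) ?_
  intro f x y hxy IH
  have hcomp : t ∘ (f * Equiv.swap x y) = (t ∘ f) ∘ Equiv.swap x y := by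
    funext j; simp [Function.comp, Equiv.Perm.mul_apply]
  rw [hcomp]
  have hc : ∀ i j, (t ∘ f) i * (t ∘ f) j = (t ∘ f) j * (t ∘ f) i := fun i j => hcomm _ _
  rcases le_total (x : ℕ) (y : ℕ) with h | h
  · exact Relation.EqvGen.trans _ _ _
      (HurwitzAux.equiv_swap ((y : ℕ) - (x : ℕ)) (t ∘ f) hc x y (by omega)) IH
  · rw [Equiv.swap_comm]
    exact Relation.EqvGen.trans _ _ _
      (HurwitzAux.equiv_swap ((x : ℕ) - (y : ℕ)) (t ∘ f) hc y x (by omega)) IH
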